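/- Let A and B be closed linear subspaces of a Hilbert space H and let x ∈ H. Define b₀ = x, aₙ = P_A(b_{n-1}), bₙ = P_B(aₙ), where P_A, P_B denote orthogonal projections. Then both sequences (aₙ) and (bₙ) converge in norm to P_{A∩B}(x). -/

import Mathlib

open RealInnerProductSpace Filter

noncomputable def proj {E : Type*} [NormedAddCommGroup E] [InnerProductSpace ℝ E]
    (K : Submodule ℝ E) [CompleteSpace K] : E →L[ℝ] E :=
  K.subtypeL.comp (K.orthogonalProjectionOnto)

section helpers
variable {E : Type*} [NormedAddCommGroup E] [InnerProductSpace ℝ E]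
  (K : Submodule ℝ E) [CompleteSpace K]

lemma proj_mem (u : E) : proj K u ∈ K := (K.orthogonalProjectionOnto u).2

lemma proj_eq_self {u : E} (h : u ∈ K) : proj K u = u :=
  K.starProjection_eq_self_iff.mpr h

lemma proj_inner (u v : E) : ⟪proj K u, v⟫ = ⟪u, proj K v⟫ :=
  K.inner_starProjection_left_eq_right u v

lemma proj_norm_le (u : E) : ‖proj K u‖ ≤ ‖u‖ := by
  calc ‖proj K u‖ ≤ ‖K.orthogonalProjectionOnto‖ * ‖u‖ := by
        simpa [proj] using (K.orthogonalProjectionOnto).le_opNorm u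
    _ ≤ 1 * ‖u‖ := mul_le_mul_of_nonneg_right (Submodule.orthogonalProjectionOnto_norm_le K) (norm_nonneg u)
    _ = ‖u‖ := one_mul _

lemma inner_proj_self (u : E) : ⟪proj K u, u⟫ = ‖proj K u‖ ^ 2 := by
  have h1 : proj K (proj K u) = proj K u := proj_eq_self K (proj_mem K u)
  calc ⟪proj K u, u⟫ = ⟪proj K (proj K u), u⟫ := by rw [h1]
    _ = ⟪proj K u, proj K u⟫ := proj_inner K _ _
    _ = ‖proj K u‖ ^ 2 := real_inner_self_eq_norm_sq _
end helpers

section seqc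
variable {E : Type*} [NormedAddCommGroup E] [InnerProductSpace ℝ E]
  (A B : Submodule ℝ E) [CompleteSpace A] [CompleteSpace B] (x : E)

noncomputable def seqc : ℕ → E
  | 0 => x
  | (n + 1) => if n % 2 = 0 then proj A (seqc n) else proj B (seqc n)

lemma seqc_even_step {n : ℕ} (h : n % 2 = 0) :
    seqc A B x (n + 1) = proj A (seqc A B x n) := by simp [seqc, h]

lemma seqc_odd_step {n : ℕ} (h : n % 2 = 1) :
    seqc A B x (n + 1) = proj B (seqc A B x n) := by simp [seqc, h]

lemma seqc_mem_A {n : ℕ} (h : n % 2 = 1) : seqc A B x n ∈ A := by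
  obtain ⟨k, rfl⟩ : ∃ k, n = k + 1 := ⟨n - 1, by omega⟩
  rw [seqc_even_step A B x (by omega)]
  exact proj_mem A _

lemma seqc_mem_B {n : ℕ} (h1 : 1 ≤ n) (h : n % 2 = 0) : seqc A B x n ∈ B := by
  obtain ⟨k, rfl⟩ : ∃ k, n = k + 1 := ⟨n - 1, by omega⟩
  rw [seqc_odd_step A B x (by omega)]
  exact proj_mem B _

lemma seqc_norm_mono (n : ℕ) : ‖seqc A B x (n + 1)‖ ≤ ‖seqc A B x n‖ := by
  rcases Nat.even_or_odd n with h | h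
  · rw [seqc_even_step A B x (Nat.even_iff.mp h)]; exact proj_norm_le A _
  · rw [seqc_odd_step A B x (Nat.odd_iff.mp h)]; exact proj_norm_le B _

lemma seqc_norm_anti : Antitone (fun n => ‖seqc A B x n‖) :=
  antitone_nat_of_succ_le (seqc_norm_mono A B x)

lemma seqc_adj (m : ℕ) : ⟪seqc A B x m, seqc A B x (m + 1)⟫ = ‖seqc A B x (m + 1)‖ ^ 2 := by
  rcases Nat.even_or_odd m with h | h
  · rw [seqc_even_step A B x (Nat.even_iff.mp h), real_inner_comm, inner_proj_self]
  · rw [seqc_odd_step A B x (Nat.odd_iff.mp h), real_inner_comm, inner_proj_self]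

lemma seqc_step (m n : ℕ) (h1 : 1 ≤ n) :
    ⟪seqc A B x n, seqc A B x (m + 1)⟫ = ⟪seqc A B x n, seqc A B x m⟫ ∨
      ⟪seqc A B x n, seqc A B x (m + 1)⟫ = ⟪seqc A B x (n + 1), seqc A B x m⟫ := by
  rcases Nat.even_or_odd m with hm | hm
  · rw [seqc_even_step A B x (Nat.even_iff.mp hm), ← proj_inner]
    rcases Nat.even_or_odd n with hn | hn
    · right; rw [← seqc_even_step A B x (Nat.even_iff.mp hn)]
    · left; rw [proj_eq_self A (seqc_mem_A A B x (Nat.odd_iff.mp hn))]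
  · rw [seqc_odd_step A B x (Nat.odd_iff.mp hm), ← proj_inner]
    rcases Nat.even_or_odd n with hn | hn
    · left; rw [proj_eq_self B (seqc_mem_B A B x h1 (Nat.even_iff.mp hn))]
    · right; rw [← seqc_odd_step A B x (Nat.odd_iff.mp hn)]

lemma seqc_key : ∀ m n : ℕ, 1 ≤ n → n ≤ m →
    ‖seqc A B x m‖ ^ 2 ≤ ⟪seqc A B x n, seqc A B x m⟫ := by
  intro m
  induction m with
  | zero => intro n h1 h2; omega
  | succ m IH =>
    intro n h1 h2
    have hmm : ‖seqc A B x (m + 1)‖ ^ 2 ≤ ‖seqc A B x m‖ ^ 2 := by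
      have := seqc_norm_mono A B x m
      have h0 : (0:ℝ) ≤ ‖seqc A B x (m+1)‖ := norm_nonneg _
      nlinarith
    rcases eq_or_lt_of_le h2 with rfl | hlt
    · rw [real_inner_self_eq_norm_sq]
    · have hnm : n ≤ m := by omega
      rcases eq_or_lt_of_le hnm with rfl | hlt2
      · rw [real_inner_comm, ← seqc_adj A B x n, real_inner_comm]
      · rcases seqc_step A B x m n h1 with h | h
        · rw [h]; exact le_trans hmm (IH n h1 hnm)
        · rw [h]; exact le_trans hmm (IH (n + 1) (by omega) (by omega))

lemma seqc_dist_sq (n m : ℕ) (h1 : 1 ≤ n) (h2 : n ≤ m) :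
    ‖seqc A B x n - seqc A B x m‖ ^ 2 ≤ ‖seqc A B x n‖ ^ 2 - ‖seqc A B x m‖ ^ 2 := by
  have hk := seqc_key A B x m n h1 h2
  rw [norm_sub_sq_real]
  nlinarith

/-- the shifted sequence is Cauchy -/
lemma seqc_cauchy : CauchySeq (fun n => seqc A B x (n + 1)) := by
  set f : ℕ → ℝ := fun n => ‖seqc A B x n‖ ^ 2 with hf
  have hanti : Antitone f := fun n m h => by
    have := seqc_norm_anti A B x h
    have h0 : (0:ℝ) ≤ ‖seqc A B x m‖ := norm_nonneg _
    simp only [f]; nlinarith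
  have hbdd : BddBelow (Set.range f) := ⟨0, by rintro r ⟨n, rfl⟩; positivity⟩
  set L : ℝ := ⨅ n, f n with hL
  have hfL : Tendsto f atTop (nhds L) := tendsto_atTop_ciInf hanti hbdd
  have hLle : ∀ n, L ≤ f n := fun n => ciInf_le hbdd n
  have key : ∀ n m N : ℕ, N ≤ n → n ≤ m →
      dist (seqc A B x (n + 1)) (seqc A B x (m + 1)) ≤ Real.sqrt (f (N + 1) - L) := by
    intro n m N hN hnm
    rw [dist_eq_norm]
    have h2 : ‖seqc A B x (n+1) - seqc A B x (m+1)‖ ^ 2 ≤ f (N + 1) - L := by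
      have h5 := seqc_dist_sq A B x (n+1) (m+1) (by omega) (by omega)
      have h3 : f (n+1) ≤ f (N+1) := hanti (by omega)
      have h4 := hLle (m+1)
      simp only [f] at h5 h3 h4 ⊢
      linarith
    have hnn : (0:ℝ) ≤ ‖seqc A B x (n+1) - seqc A B x (m+1)‖ := norm_nonneg _
    exact (Real.le_sqrt hnn (by nlinarith)).mpr h2
  apply cauchySeq_of_le_tendsto_0 (fun N => Real.sqrt (f (N + 1) - L))
  · intro n m N hn hm
    rcases le_total n m with h | h
    · exact key n m N hn h
    · rw [dist_comm]; exact key m n N hm h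
  · have hts : Tendsto (fun N : ℕ => f (N + 1) - L) atTop (nhds 0) := by
      have h1 : Tendsto (fun N : ℕ => f (N + 1)) atTop (nhds L) :=
        hfL.comp (tendsto_add_atTop_nat 1)
      have h2 : Tendsto (fun _ : ℕ => L) atTop (nhds L) := tendsto_const_nhds
      simpa using h1.sub h2
    have h6 := (Real.continuous_sqrt.tendsto 0).comp hts
    simpa [Function.comp_def] using h6

lemma seqc_inner_const {z : E} (hzA : z ∈ A) (hzB : z ∈ B) (n : ℕ) :
    ⟪seqc A B x n, z⟫ = ⟪x, z⟫ := by
  induction n with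
  | zero => rfl
  | succ n IH =>
    rcases Nat.even_or_odd n with h | h
    · rw [seqc_even_step A B x (Nat.even_iff.mp h), proj_inner, proj_eq_self A hzA, IH]
    · rw [seqc_odd_step A B x (Nat.odd_iff.mp h), proj_inner, proj_eq_self B hzB, IH]
end seqc

theorem stmt0 {E : Type*} [NormedAddCommGroup E] [InnerProductSpace ℝ E] [CompleteSpace E]
    (A B : Submodule ℝ E) [CompleteSpace A] [CompleteSpace B] [CompleteSpace ↥(A ⊓ B)]
    (x : E) (a b : ℕ → E) (hb0 : b 0 = x)
    (ha : ∀ n : ℕ, a (n + 1) = proj A (b n))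
    (hb : ∀ n : ℕ, b (n + 1) = proj B (a (n + 1))) :
    Filter.Tendsto (fun n => a (n + 1)) Filter.atTop (nhds (proj (A ⊓ B) x)) ∧
      Filter.Tendsto b Filter.atTop (nhds (proj (A ⊓ B) x)) := by
  set c : ℕ → E := seqc A B x with hc
  -- identification of a, b with c
  have hspec : ∀ n : ℕ, c (2 * n) = b n ∧ c (2 * n + 1) = a (n + 1) := by
    intro n
    induction n with
    | zero =>
      constructor
      · simpa [hc, seqc] using hb0.symm
      · rw [show 2 * 0 + 1 = 0 + 1 from rfl, hc, seqc_even_step A B x (by omega), ha 0, hb0]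
        rfl
    | succ n IH =>
      have h1 : c (2 * (n + 1)) = b (n + 1) := by
        rw [show 2 * (n + 1) = (2 * n + 1) + 1 by ring, hc,
          seqc_odd_step A B x (by omega), ← hc, IH.2, hb n]
      refine ⟨h1, ?_⟩
      rw [show 2 * (n + 1) + 1 = (2 * (n + 1)) + 1 from rfl, hc,
        seqc_even_step A B x (by omega), ← hc, h1, ha (n + 1)]
  -- convergence of the shifted sequence
  obtain ⟨y, hy⟩ : ∃ y, Tendsto (fun n => c (n + 1)) atTop (nhds y) :=
    cauchySeq_tendsto_of_complete (seqc_cauchy A B x)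
  -- subsequence limits
  have h2n : Tendsto (fun n : ℕ => 2 * n) atTop atTop :=
    Filter.tendsto_atTop_atTop_of_monotone (fun _ _ h => by omega) (fun n => ⟨n, by omega⟩)
  have hA_lim : Tendsto (fun n => a (n + 1)) atTop (nhds y) := by
    have : Tendsto (fun n : ℕ => c (2 * n + 1)) atTop (nhds y) := hy.comp h2n
    simpa only [(hspec _).2] using this
  have hB_lim : Tendsto b atTop (nhds y) := by
    have h1 : Tendsto (fun n : ℕ => c (2 * (n + 1))) atTop (nhds y) := by
      have : Tendsto (fun n : ℕ => c (2 * n + 1 + 1)) atTop (nhds y) :=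
        hy.comp (tendsto_atTop_atTop_of_monotone (fun _ _ h => by omega) (fun n => ⟨n, by omega⟩))
      simpa only [show ∀ n : ℕ, 2 * n + 1 + 1 = 2 * (n + 1) from fun n => by ring] using this
    have h2 : Tendsto (fun n => b (n + 1)) atTop (nhds y) := by
      simpa only [(hspec _).1] using h1
    exact (Filter.tendsto_add_atTop_iff_nat 1).mp h2
  -- y ∈ A ⊓ B
  have hclA : IsClosed (A : Set E) := (completeSpace_coe_iff_isComplete.mp ‹_›).isClosed
  have hclB : IsClosed (B : Set E) := (completeSpace_coe_iff_isComplete.mp ‹_›).isClosed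
  have hyA : y ∈ A := hclA.mem_of_tendsto hA_lim
    (Filter.Eventually.of_forall fun n => by rw [ha n]; exact proj_mem A _)
  have hyB : y ∈ B := hclB.mem_of_tendsto hB_lim
    (Filter.eventually_atTop.mpr ⟨1, fun n hn => by
      obtain ⟨k, rfl⟩ : ∃ k, n = k + 1 := ⟨n - 1, by omega⟩
      rw [hb k]; exact proj_mem B _⟩)
  -- y = proj (A ⊓ B) x
  have horth : ∀ w ∈ A ⊓ B, ⟪x - y, w⟫ = 0 := by
    intro w hw
    have hwA : w ∈ A := hw.1
    have hwB : w ∈ B := hw.2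
    have hconst : ∀ n : ℕ, ⟪c (n + 1), w⟫ = ⟪x, w⟫ := fun n =>
      seqc_inner_const A B x hwA hwB (n + 1)
    have hlim : Tendsto (fun n => ⟪c (n + 1), w⟫) atTop (nhds ⟪y, w⟫) :=
      hy.inner tendsto_const_nhds
    have hcn : Tendsto (fun _ : ℕ => ⟪x, w⟫) atTop (nhds ⟪x, w⟫) := tendsto_const_nhds
    have hyx : ⟪y, w⟫ = ⟪x, w⟫ :=
      tendsto_nhds_unique hlim (by simpa only [hconst] using hcn)
    rw [inner_sub_left, hyx, sub_self]
  have hproj : proj (A ⊓ B) x = y :=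
    Submodule.eq_starProjection_of_mem_of_inner_eq_zero (Submodule.mem_inf.mpr ⟨hyA, hyB⟩) horth
  rw [hproj]
  exact ⟨hA_lim, hB_lim⟩
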